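/- arXiv:2006.00711 — 2 statements merged into one kernel-verified Lean document; each statement's English description precedes it below -/
import Mathlib

section
/- Let h be a finite dimensional Leibniz algebra with basis {e_1,…,e_n}. The map θ ↦ γ(θ), γ(θ)(e_i) = Σ_s θ(x_{si}) e_s, is an isomorphism of monoids from the monoid of algebra homomorphisms A(h) → k under convolution onto the monoid End_Lbz(h) of Leibniz algebra endomorphisms of h under composition. -/
open TensorProduct MvPolynomial

set_option synthInstance.maxHeartbeats 1000000
set_option maxHeartbeats 1000000

/-- The universal polynomial `P_{(a,i,j)} = Σ_u β^u_{ij} X_{au} - Σ_{s,t} τ^a_{st} X_{si} X_{tj}`. -/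
noncomputable def univPoly {k : Type*} [Field k] {n : ℕ} {I : Type*}
    (τ : Fin n → Fin n → Fin n → k) (β : I → I → I →₀ k)
    (a : Fin n) (i j : I) : MvPolynomial (Fin n × I) k :=
  (β i j).sum (fun u c => C c * X (a, u)) -
    ∑ s : Fin n, ∑ t : Fin n, C (τ s t a) * X (s, i) * X (t, j)

/-- The ideal generated by the universal polynomials. -/
noncomputable def univIdeal {k : Type*} [Field k] {n : ℕ} {I : Type*}
    (τ : Fin n → Fin n → Fin n → k) (β : I → I → I →₀ k) :
    Ideal (MvPolynomial (Fin n × I) k) :=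
  Ideal.span (Set.range fun p : Fin n × I × I => univPoly τ β p.1 p.2.1 p.2.2)

/-- The universal algebra `A(h,g)`. -/
noncomputable abbrev univAlg {k : Type*} [Field k] {n : ℕ} {I : Type*}
    (τ : Fin n → Fin n → Fin n → k) (β : I → I → I →₀ k) :=
  MvPolynomial (Fin n × I) k ⧸ univIdeal τ β

/-- The generator `x_{si}` of `A(h,g)`. -/
noncomputable def univGen {k : Type*} [Field k] {n : ℕ} {I : Type*}
    (τ : Fin n → Fin n → Fin n → k) (β : I → I → I →₀ k)
    (s : Fin n) (i : I) : univAlg τ β :=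
  Ideal.Quotient.mk (univIdeal τ β) (X (s, i))

/-- The universal ideal of a single `n`-dimensional Leibniz algebra `h`
(with structure constants `τ`), inside `M(n) = k[X_{ij}]`. -/
noncomputable abbrev univIdealH {k : Type*} [Field k] {n : ℕ}
    (τ : Fin n → Fin n → Fin n → k) : Ideal (MvPolynomial (Fin n × Fin n) k) :=
  univIdeal τ (fun i j => Finsupp.equivFunOnFinite.symm (τ i j))

/-- The universal algebra `A(h) = A(h,h)` of an `n`-dimensional Leibniz algebra. -/
noncomputable abbrev univAlgH {k : Type*} [Field k] {n : ℕ}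
    (τ : Fin n → Fin n → Fin n → k) :=
  univAlg τ (fun i j => Finsupp.equivFunOnFinite.symm (τ i j))

/-- The generator `x_{ij}` of `A(h)`. -/
noncomputable abbrev univGenH {k : Type*} [Field k] {n : ℕ}
    (τ : Fin n → Fin n → Fin n → k) (i j : Fin n) : univAlgH τ :=
  univGen τ (fun i j => Finsupp.equivFunOnFinite.symm (τ i j)) i j

/-- The comultiplication of the matrix bialgebra `M(n) = k[X_{ij}]`:
`Δ(X_{ij}) = Σ_s X_{is} ⊗ X_{sj}`. -/
noncomputable def deltaM (k : Type*) [Field k] (n : ℕ) :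
    MvPolynomial (Fin n × Fin n) k →ₐ[k]
      MvPolynomial (Fin n × Fin n) k ⊗[k] MvPolynomial (Fin n × Fin n) k :=
  MvPolynomial.aeval (fun p : Fin n × Fin n =>
    ∑ s : Fin n, MvPolynomial.X (p.1, s) ⊗ₜ[k] MvPolynomial.X (s, p.2))

/-- The counit of the matrix bialgebra `M(n)`: `ε(X_{ij}) = δ_{ij}`. -/
noncomputable def epsM (k : Type*) [Field k] (n : ℕ) :
    MvPolynomial (Fin n × Fin n) k →ₐ[k] k :=
  MvPolynomial.aeval (fun p : Fin n × Fin n => if p.1 = p.2 then 1 else 0)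

/-- The map `γ` sending a character `θ : A(h) → k` to the endomorphism
`γ(θ)(e_i) = Σ_s θ(x_{si}) e_s` of `h = k^n`, i.e. `γ(θ) = (Id ⊗ θ) ∘ η_h` followed
by the canonical isomorphism `h ⊗ k ≅ h`. -/
noncomputable def gammaMap {k : Type*} [Field k] {n : ℕ}
    {τ : Fin n → Fin n → Fin n → k}
    (η : (Fin n → k) →ₗ[k] (Fin n → k) ⊗[k] univAlgH τ)
    (θ : univAlgH τ →ₐ[k] k) : (Fin n → k) →ₗ[k] (Fin n → k) :=
  (TensorProduct.rid k (Fin n → k)).toLinearMap ∘ₗ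
    TensorProduct.map LinearMap.id θ.toLinearMap ∘ₗ η

/-- The convolution product of two linear functionals on `A(h)`, with respect to the
comultiplication `Δ_A`. -/
noncomputable def convMap {k : Type*} [Field k] {n : ℕ}
    {τ : Fin n → Fin n → Fin n → k}
    (ΔA : univAlgH τ →ₐ[k] univAlgH τ ⊗[k] univAlgH τ)
    (θ₁ θ₂ : univAlgH τ →ₗ[k] k) : univAlgH τ →ₗ[k] k :=
  LinearMap.mul' k k ∘ₗ TensorProduct.map θ₁ θ₂ ∘ₗ ΔA.toLinearMap


section AuxStmt16

variable {k : Type*} [Field k] {n : ℕ} {τ : Fin n → Fin n → Fin n → k}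

/-- Extensionality for linear maps out of `Fin n → k` via the standard basis. -/
lemma piLinExt {M : Type*} [AddCommMonoid M] [Module k M]
    {f g : (Fin n → k) →ₗ[k] M}
    (h : ∀ i, f (Pi.single i 1) = g (Pi.single i 1)) : f = g := by
  apply (Pi.basisFun k (Fin n)).ext
  intro i
  simpa [Pi.basisFun_apply] using h i

/-- Every vector of `Fin n → k` is a combination of the standard basis. -/
lemma fun_eq_sum_single (w : Fin n → k) :
    w = ∑ i : Fin n, w i • (Pi.single i 1 : Fin n → k) := by
  conv_lhs => rw [← Finset.univ_sum_single w]
  exact Finset.sum_congr rfl fun i _ => by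
    rw [← Pi.single_smul, smul_eq_mul, mul_one]

/-- The value of `gammaMap` on a basis vector. -/
lemma gamma_single (η : (Fin n → k) →ₗ[k] (Fin n → k) ⊗[k] univAlgH τ)
    (hη : ∀ i : Fin n, η (Pi.single i 1) =
      ∑ s : Fin n, Pi.single s 1 ⊗ₜ[k] univGenH τ s i)
    (θ : univAlgH τ →ₐ[k] k) (i : Fin n) :
    gammaMap η θ (Pi.single i 1) =
      ∑ s : Fin n, θ (univGenH τ s i) • (Pi.single s 1 : Fin n → k) := by
  simp [gammaMap, hη, TensorProduct.map_tmul, TensorProduct.rid_tmul]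

lemma gamma_single_coord (η : (Fin n → k) →ₗ[k] (Fin n → k) ⊗[k] univAlgH τ)
    (hη : ∀ i : Fin n, η (Pi.single i 1) =
      ∑ s : Fin n, Pi.single s 1 ⊗ₜ[k] univGenH τ s i)
    (θ : univAlgH τ →ₐ[k] k) (i s : Fin n) :
    gammaMap η θ (Pi.single i 1) s = θ (univGenH τ s i) := by
  rw [gamma_single η hη]
  simp [Pi.single_apply]

lemma finsupp_sum_eq (i j : Fin n) :
    ((Finsupp.equivFunOnFinite.symm (τ i j) : Fin n →₀ k)).sum
        (fun u c => MvPolynomial.C c * MvPolynomial.X (Prod.mk a u)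
          : Fin n → k → MvPolynomial (Fin n × Fin n) k)
      = ∑ u : Fin n, MvPolynomial.C (τ i j u) * MvPolynomial.X (a, u) := by
  rw [Finsupp.sum_fintype]
  · simp
  · intro u; simp

/-- The defining relation of `A(h)` applied to a character. -/
lemma char_rel (θ : univAlgH τ →ₐ[k] k) (a i j : Fin n) :
    ∑ u : Fin n, τ i j u * θ (univGenH τ a u) =
      ∑ s : Fin n, ∑ t : Fin n,
        τ s t a * θ (univGenH τ s i) * θ (univGenH τ t j) := by
  have hmem : univPoly τ (fun i j => Finsupp.equivFunOnFinite.symm (τ i j)) a i j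
      ∈ univIdealH τ := Ideal.subset_span ⟨(a, i, j), rfl⟩
  set ψ : MvPolynomial (Fin n × Fin n) k →ₐ[k] k :=
    θ.comp (Ideal.Quotient.mkₐ k (univIdealH τ)) with hψdef
  have hψ0 : ψ (univPoly τ (fun i j => Finsupp.equivFunOnFinite.symm (τ i j)) a i j)
      = 0 := by
    have : (Ideal.Quotient.mkₐ k (univIdealH τ))
        (univPoly τ (fun i j => Finsupp.equivFunOnFinite.symm (τ i j)) a i j) = 0 := by
      rw [Ideal.Quotient.mkₐ_eq_mk, Ideal.Quotient.eq_zero_iff_mem]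
      exact hmem
    rw [hψdef, AlgHom.comp_apply, this, map_zero]
  rw [univPoly, finsupp_sum_eq, map_sub, sub_eq_zero] at hψ0
  have hgen : ∀ p : Fin n × Fin n, ψ (MvPolynomial.X p) = θ (univGenH τ p.1 p.2) := by
    intro p; rfl
  have hC : ∀ c : k, ψ (MvPolynomial.C c) = c := by
    intro c
    rw [← MvPolynomial.algebraMap_eq, AlgHom.commutes]
    simp
  calc ∑ u : Fin n, τ i j u * θ (univGenH τ a u)
      = ψ (∑ u : Fin n, MvPolynomial.C (τ i j u) * MvPolynomial.X (a, u)) := by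
        rw [map_sum]
        exact Finset.sum_congr rfl fun u _ => by rw [map_mul, hC, hgen (a, u)]
    _ = ψ (∑ s : Fin n, ∑ t : Fin n, MvPolynomial.C (τ s t a)
          * MvPolynomial.X (s, i) * MvPolynomial.X (t, j)) := hψ0
    _ = ∑ s : Fin n, ∑ t : Fin n,
          τ s t a * θ (univGenH τ s i) * θ (univGenH τ t j) := by
        rw [map_sum]
        exact Finset.sum_congr rfl fun s _ => by
          rw [map_sum]
          exact Finset.sum_congr rfl fun t _ => by
            rw [map_mul, map_mul, hC, hgen (s, i), hgen (t, j)]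

lemma gen_values_eq {θ θ' : univAlgH τ →ₐ[k] k}
    (h : ∀ s i, θ (univGenH τ s i) = θ' (univGenH τ s i)) : θ = θ' := by
  apply Ideal.Quotient.algHom_ext
  apply MvPolynomial.algHom_ext
  intro p
  simpa [univGenH, univGen] using h p.1 p.2

end AuxStmt16

/-- `γ : θ ↦ (e_i ↦ Σ_s θ(x_{si}) e_s)` is an isomorphism of monoids
from the algebra characters of `A(h)` under convolution onto the monoid of Leibniz
algebra endomorphisms of `h` under composition: it is given by the stated formula,
lands in Leibniz endomorphisms, is bijective onto them, sends convolution to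
composition and the convolution unit `ε` to the identity. -/
theorem stmt_16 (k : Type*) [Field k] (n : ℕ) (τ : Fin n → Fin n → Fin n → k)
    (bH : (Fin n → k) →ₗ[k] (Fin n → k) →ₗ[k] (Fin n → k))
    (hbH : ∀ i j : Fin n, bH (Pi.single i 1) (Pi.single j 1) = fun s => τ i j s)
    (hLH : ∀ x y z, bH x (bH y z) = bH (bH x y) z - bH (bH x z) y)
    (ΔA : univAlgH τ →ₐ[k] univAlgH τ ⊗[k] univAlgH τ) (εA : univAlgH τ →ₐ[k] k)
    (hΔ : ∀ i j : Fin n, ΔA (univGenH τ i j) =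
      ∑ s : Fin n, univGenH τ i s ⊗ₜ[k] univGenH τ s j)
    (hε : ∀ i j : Fin n, εA (univGenH τ i j) = if i = j then 1 else 0)
    (η : (Fin n → k) →ₗ[k] (Fin n → k) ⊗[k] univAlgH τ)
    (hη : ∀ i : Fin n, η (Pi.single i 1) =
      ∑ s : Fin n, Pi.single s 1 ⊗ₜ[k] univGenH τ s i) :
    (∀ (θ : univAlgH τ →ₐ[k] k) (i : Fin n), gammaMap η θ (Pi.single i 1) =
      ∑ s : Fin n, θ (univGenH τ s i) • (Pi.single s 1 : Fin n → k)) ∧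
    (∀ θ : univAlgH τ →ₐ[k] k, ∀ u v : Fin n → k,
      gammaMap η θ (bH u v) = bH (gammaMap η θ u) (gammaMap η θ v)) ∧
    (∀ f : (Fin n → k) →ₗ[k] (Fin n → k),
      (∀ u v : Fin n → k, f (bH u v) = bH (f u) (f v)) →
        ∃! θ : univAlgH τ →ₐ[k] k, gammaMap η θ = f) ∧
    (∀ θ₁ θ₂ θ₃ : univAlgH τ →ₐ[k] k,
      θ₃.toLinearMap = convMap ΔA θ₁.toLinearMap θ₂.toLinearMap →
        gammaMap η θ₃ = gammaMap η θ₁ ∘ₗ gammaMap η θ₂) ∧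
    gammaMap η εA = LinearMap.id := by
  have hγ := gamma_single η hη
  have hγc := gamma_single_coord η hη
  refine ⟨hγ, ?_, ?_, ?_, ?_⟩
  · -- γ(θ) preserves the bracket
    intro θ u v
    have hbasis : ∀ i j : Fin n,
        gammaMap η θ (bH (Pi.single i 1) (Pi.single j 1)) =
          bH (gammaMap η θ (Pi.single i 1)) (gammaMap η θ (Pi.single j 1)) := by
      intro i j
      have h1 : bH (Pi.single i 1) (Pi.single j 1)
          = ∑ u : Fin n, τ i j u • (Pi.single u 1 : Fin n → k) := by
        rw [hbH i j]; exact fun_eq_sum_single _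
      have hL : gammaMap η θ (bH (Pi.single i 1) (Pi.single j 1))
          = fun a => ∑ u : Fin n, τ i j u * θ (univGenH τ a u) := by
        rw [h1, map_sum]
        funext a
        simp only [Finset.sum_apply, map_smul, Pi.smul_apply, hγ, Finset.sum_apply,
          Pi.single_apply, smul_eq_mul, mul_ite, mul_one, mul_zero,
          Finset.sum_ite_eq', Finset.sum_ite_eq, Finset.mem_univ, if_true, Finset.mul_sum]
      have hR : bH (gammaMap η θ (Pi.single i 1)) (gammaMap η θ (Pi.single j 1))
          = fun a => ∑ s : Fin n, ∑ t : Fin n,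
              τ s t a * θ (univGenH τ s i) * θ (univGenH τ t j) := by
        rw [hγ, hγ]
        funext a
        simp only [map_sum, map_smul, LinearMap.sum_apply, LinearMap.smul_apply,
          Finset.sum_apply, Pi.smul_apply, hbH, smul_eq_mul, Finset.mul_sum]
        rw [Finset.sum_comm]
        exact Finset.sum_congr rfl fun s _ => Finset.sum_congr rfl fun t _ => by ring
      rw [hL, hR]
      funext a
      exact char_rel θ a i j
    rw [fun_eq_sum_single u, fun_eq_sum_single v]
    simp only [map_sum, map_smul, LinearMap.sum_apply, LinearMap.smul_apply,
      Finset.smul_sum]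
    exact Finset.sum_congr rfl fun i _ => Finset.sum_congr rfl fun j _ => by
      rw [hbasis j i]
  · -- surjectivity onto Leibniz endomorphisms, with uniqueness
    intro f hf
    set g : Fin n × Fin n → k := fun p => f (Pi.single p.2 1) p.1 with hg
    set φ : MvPolynomial (Fin n × Fin n) k →ₐ[k] k := MvPolynomial.aeval g with hφdef
    have hgenφ : ∀ a i j : Fin n,
        φ (univPoly τ (fun i j => Finsupp.equivFunOnFinite.symm (τ i j)) a i j) = 0 := by
      intro a i j
      have hfe := congrFun (hf (Pi.single i 1) (Pi.single j 1)) a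
      have hLf : f (bH (Pi.single i 1) (Pi.single j 1)) a
          = ∑ u : Fin n, τ i j u * g (a, u) := by
        rw [hbH i j, fun_eq_sum_single (fun s => τ i j s), map_sum]
        simp [hg, Finset.sum_apply]
      have hRf : bH (f (Pi.single i 1)) (f (Pi.single j 1)) a
          = ∑ s : Fin n, ∑ t : Fin n, τ s t a * g (s, i) * g (t, j) := by
        rw [fun_eq_sum_single (f (Pi.single i 1)),
          fun_eq_sum_single (f (Pi.single j 1))]
        simp only [map_sum, map_smul, LinearMap.sum_apply, LinearMap.smul_apply,
          Finset.sum_apply, Pi.smul_apply, hbH, smul_eq_mul, Finset.mul_sum]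
        rw [Finset.sum_comm]
        exact Finset.sum_congr rfl fun s _ => Finset.sum_congr rfl fun t _ => by
          simp only [hg]; ring
      rw [univPoly, finsupp_sum_eq, map_sub, sub_eq_zero]
      have e1 : φ (∑ u : Fin n, MvPolynomial.C (τ i j u) * MvPolynomial.X (a, u))
          = ∑ u : Fin n, τ i j u * g (a, u) := by
        simp [hφdef]
      have e2 : φ (∑ s : Fin n, ∑ t : Fin n, MvPolynomial.C (τ s t a)
            * MvPolynomial.X (s, i) * MvPolynomial.X (t, j))
          = ∑ s : Fin n, ∑ t : Fin n, τ s t a * g (s, i) * g (t, j) := by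
        simp [hφdef, mul_assoc]
      rw [e1, e2, ← hLf, ← hRf, hfe]
    have hker : ∀ a ∈ univIdealH τ, φ a = 0 := by
      intro a ha
      have hle : univIdealH τ ≤ RingHom.ker φ.toRingHom := by
        rw [univIdealH, univIdeal, Ideal.span_le]
        rintro _ ⟨⟨a, i, j⟩, rfl⟩
        simpa [RingHom.mem_ker] using hgenφ a i j
      exact hle ha
    refine ⟨Ideal.Quotient.liftₐ _ φ hker, ?_, ?_⟩
    · have hθgen : ∀ s i : Fin n,
          (Ideal.Quotient.liftₐ _ φ hker) (univGenH τ s i) = f (Pi.single i 1) s := by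
        intro s i
        rw [univGenH, univGen, Ideal.Quotient.liftₐ_apply]
        erw [Ideal.Quotient.lift_mk]
        simp [hφdef, hg]
      apply piLinExt
      intro i
      rw [hγ, Finset.sum_congr rfl fun s _ => by rw [hθgen s i]]
      exact (fun_eq_sum_single (f (Pi.single i 1))).symm
    · intro θ' hθ'
      apply gen_values_eq
      intro s i
      rw [← hγc θ' i s, hθ', univGenH, univGen, Ideal.Quotient.liftₐ_apply]
      erw [Ideal.Quotient.lift_mk]
      simp [hφdef, hg]
  · -- convolution ↦ composition
    intro θ₁ θ₂ θ₃ hc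
    have hgen : ∀ i j : Fin n, θ₃ (univGenH τ i j)
        = ∑ s : Fin n, θ₁ (univGenH τ i s) * θ₂ (univGenH τ s j) := by
      intro i j
      have h := LinearMap.congr_fun hc (univGenH τ i j)
      simpa [convMap, hΔ, TensorProduct.map_tmul, LinearMap.mul'_apply,
        map_sum] using h
    apply piLinExt
    intro j
    rw [LinearMap.comp_apply, hγ θ₂ j, map_sum, hγ θ₃ j]
    simp only [map_smul, hγ θ₁, hgen, Finset.smul_sum, smul_smul, Finset.sum_smul]
    rw [Finset.sum_comm]
    exact Finset.sum_congr rfl fun s _ => Finset.sum_congr rfl fun i _ => by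
      rw [mul_comm]
  · -- ε ↦ id
    apply piLinExt
    intro i
    rw [hγ εA i]
    simp [hε, Pi.single_apply, ite_smul]
end

section
/- Let G be an abelian group and h a finite dimensional Leibniz algebra. There is a bijection between the set of G-gradings on h and the set of bialgebra homomorphisms A(h) → k[G]; given a bialgebra map θ : A(h) → k[G], the associated grading is h_σ^(θ) = { x ∈ h | (Id_h ⊗ θ)(η_h(x)) = x ⊗ σ } for σ ∈ G. -/
open TensorProduct MvPolynomial
open TensorProduct MvPolynomial

/- ======================= Auxiliary machinery ======================= -/

set_option linter.unusedSectionVars false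

section AuxBasis
variable {k : Type*} [Field k] {n : ℕ} {M : Type*} [AddCommMonoid M] [Module k M]

lemma single_smul_one (i : Fin n) (x : k) :
    (Pi.single i x : Fin n → k) = x • (Pi.single i 1 : Fin n → k) := by
  rw [← Pi.single_smul, smul_eq_mul, mul_one]

lemma ext_basis (f g : (Fin n → k) →ₗ[k] M)
    (h : ∀ i, f (Pi.single i 1) = g (Pi.single i 1)) : f = g := by
  apply LinearMap.pi_ext
  intro i x
  rw [single_smul_one, map_smul, map_smul, h i]

noncomputable def Cmap (c : Fin n → Fin n → M) (a : Fin n) : (Fin n → k) →ₗ[k] M :=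
  ∑ i, LinearMap.smulRight (LinearMap.proj i) (c a i)

lemma Cmap_apply (c : Fin n → Fin n → M) (a : Fin n) (x : Fin n → k) :
    Cmap c a x = ∑ i, x i • c a i := by
  simp [Cmap, LinearMap.sum_apply]

lemma Cmap_single (c : Fin n → Fin n → M) (a i : Fin n) :
    Cmap c a (Pi.single i 1 : Fin n → k) = c a i := by
  rw [Cmap_apply c a, Finset.sum_eq_single i]
  · simp
  · intro b _ hb; simp [Pi.single_apply, hb]
  · simp

lemma sum_single_smul (x : Fin n → k) : ∑ s, x s • (Pi.single s 1 : Fin n → k) = x := by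
  have : ∀ s, x s • (Pi.single s 1 : Fin n → k) = Pi.single s (x s) := by
    intro s; rw [← Pi.single_smul, smul_eq_mul, mul_one]
  simp only [this]
  exact Finset.univ_sum_single x

noncomputable def phi (s : Fin n) : ((Fin n → k) ⊗[k] M) →ₗ[k] M :=
  TensorProduct.lift ((LinearMap.lsmul k M).comp (LinearMap.proj s))

@[simp] lemma phi_tmul (s : Fin n) (x : Fin n → k) (m : M) :
    phi s (x ⊗ₜ[k] m) = x s • m := rfl

lemma tensor_decomp (z : (Fin n → k) ⊗[k] M) :
    z = ∑ s, Pi.single s 1 ⊗ₜ[k] phi s z := by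
  induction z using TensorProduct.induction_on with
  | zero => simp
  | tmul x m =>
      simp only [phi_tmul]
      simp only [← smul_tmul]
      rw [← sum_tmul, sum_single_smul]
  | add a b ha hb =>
      simp only [map_add, tmul_add, Finset.sum_add_distrib]
      rw [← ha, ← hb]

lemma phi_sum_single (s : Fin n) (v : Fin n → M) :
    phi s (∑ t, Pi.single t 1 ⊗ₜ[k] v t) = v s := by
  rw [map_sum]
  simp only [phi_tmul]
  rw [Finset.sum_eq_single s]
  · simp
  · intro b _ hb; simp [Pi.single_apply, hb]
  · simp

/-- coordinates of a bilinear map in terms of structure constants -/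
lemma bH_apply {τ : Fin n → Fin n → Fin n → k}
    {bH : (Fin n → k) →ₗ[k] (Fin n → k) →ₗ[k] (Fin n → k)}
    (hbH : ∀ i j : Fin n, bH (Pi.single i 1) (Pi.single j 1) = fun s => τ i j s)
    (x y : Fin n → k) (a : Fin n) :
    bH x y a = ∑ s, ∑ t, x s * y t * τ s t a := by
  have h : bH.compr₂ (LinearMap.proj a) =
      ∑ s, ∑ t, τ s t a •
        ((LinearMap.mul k k).compl₁₂ (LinearMap.proj s) (LinearMap.proj t)) := by
    apply ext_basis; intro i; apply ext_basis; intro j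
    simp only [LinearMap.compr₂_apply, LinearMap.proj_apply, LinearMap.sum_apply,
      LinearMap.smul_apply, LinearMap.compl₁₂_apply, LinearMap.mul_apply',
      hbH i j, Pi.single_apply, smul_eq_mul]
    rw [Finset.sum_eq_single i]
    · rw [Finset.sum_eq_single j]
      · simp
      · intro t _ ht; simp [ht]
      · simp
    · intro s _ hs
      refine Finset.sum_eq_zero fun t _ => ?_
      simp [hs]
    · simp
  have := LinearMap.congr_fun (LinearMap.congr_fun h x) y
  simpa only [LinearMap.compr₂_apply, LinearMap.proj_apply, LinearMap.sum_apply,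
    LinearMap.smul_apply, LinearMap.compl₁₂_apply, LinearMap.mul_apply', smul_eq_mul,
    mul_comm] using this

end AuxBasis

section AuxMA
variable {k : Type*} [Field k] {G : Type*} [CommGroup G] [DecidableEq G]

noncomputable def ev (g : G) : MonoidAlgebra k G →ₗ[k] k :=
  (Finsupp.lapply g).comp (MonoidAlgebra.coeffLinearEquiv k).toLinearMap

@[simp] lemma ev_single (g h : G) (a : k) :
    ev g (MonoidAlgebra.single h a) = if h = g then a else 0 := by
  show (MonoidAlgebra.single h a).coeff g = _
  exact Finsupp.single_apply

lemma ev_ext {f f' : MonoidAlgebra k G} (h : ∀ g, ev g f = ev g f') : f = f' :=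
  MonoidAlgebra.coeff_injective (Finsupp.ext h)

lemma ma_eq_sum_smul (f : MonoidAlgebra k G) :
    f = f.coeff.sum fun g a => a • MonoidAlgebra.single g 1 := by
  conv_lhs => rw [← MonoidAlgebra.sum_coeff_single f]
  refine Finsupp.sum_congr fun g _ => ?_
  rw [MonoidAlgebra.smul_single', mul_one]

noncomputable def ev2 (g h : G) : (MonoidAlgebra k G ⊗[k] MonoidAlgebra k G) →ₗ[k] k :=
  (TensorProduct.lid k k).toLinearMap.comp (TensorProduct.map (ev g) (ev h))

@[simp] lemma ev2_tmul (g h : G) (a b : MonoidAlgebra k G) :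
    ev2 g h (a ⊗ₜ[k] b) = ev g a * ev h b := by simp [ev2, smul_eq_mul]

lemma ev_apply (f : MonoidAlgebra k G) (a : G) : ev a f = f.coeff a := rfl

lemma finsupp_sum_pick (f : MonoidAlgebra k G) (a : G) :
    (f.coeff.sum fun g c => if g = a then c else 0) = ev a f := by
  classical
  rw [Finsupp.sum, Finset.sum_eq_single a]
  · simp [ev_apply]
  · intro b _ hb; simp [hb]
  · intro h; simp [ev_apply, Finsupp.notMem_support_iff.mp h]

variable (ΔG : MonoidAlgebra k G →ₐ[k] MonoidAlgebra k G ⊗[k] MonoidAlgebra k G)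
    (hΔG : ∀ σ : G, ΔG (MonoidAlgebra.of k G σ) =
      MonoidAlgebra.of k G σ ⊗ₜ[k] MonoidAlgebra.of k G σ)
    (εG : MonoidAlgebra k G →ₐ[k] k)
    (hεG : ∀ σ : G, εG (MonoidAlgebra.of k G σ) = 1)

include hΔG in
lemma DeltaG_apply (f : MonoidAlgebra k G) :
    ΔG f = f.coeff.sum fun g a => a • (MonoidAlgebra.single g 1 ⊗ₜ[k] MonoidAlgebra.single g 1) := by
  conv_lhs => rw [ma_eq_sum_smul f]
  rw [map_finsuppSum]
  refine Finsupp.sum_congr fun g _ => ?_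
  rw [map_smul]
  congr 1
  have := hΔG g
  rwa [MonoidAlgebra.of_apply] at this

include hΔG in
lemma ev2_DeltaG (a b : G) (f : MonoidAlgebra k G) :
    ev2 a b (ΔG f) = if a = b then ev a f else 0 := by
  rw [DeltaG_apply ΔG hΔG, map_finsuppSum]
  simp only [map_smul, ev2_tmul, ev_single, smul_eq_mul]
  by_cases hab : a = b
  · subst hab
    rw [if_pos rfl, ← finsupp_sum_pick f a]
    refine Finsupp.sum_congr fun g _ => ?_
    by_cases hg : g = a <;> simp [hg]
  · rw [if_neg hab, Finsupp.sum]
    refine Finset.sum_eq_zero fun g _ => ?_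
    by_cases hg : g = a
    · subst hg
      rw [if_pos rfl, if_neg hab, mul_zero, mul_zero]
    · rw [if_neg hg, zero_mul, mul_zero]

include hεG in
lemma epsG_apply (f : MonoidAlgebra k G) : εG f = f.coeff.sum fun _ a => a := by
  conv_lhs => rw [ma_eq_sum_smul f]
  rw [map_finsuppSum]
  refine Finsupp.sum_congr fun g _ => ?_
  rw [map_smul]
  have := hεG g
  rw [MonoidAlgebra.of_apply] at this
  rw [this, smul_eq_mul, mul_one]

include hεG in
lemma sum_ev_eq_eps (f : MonoidAlgebra k G) (S : Finset G) (hS : f.coeff.support ⊆ S) :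
    ∑ g ∈ S, ev g f = εG f := by
  rw [epsG_apply εG hεG, Finsupp.sum, Finset.sum_subset hS]
  · rfl
  · intro g _ hg
    exact Finsupp.notMem_support_iff.mp hg

end AuxMA

section AuxRel
variable {k : Type*} [Field k] {n : ℕ}

lemma gen_relation (τ : Fin n → Fin n → Fin n → k) (a i j : Fin n) :
    ∑ u, τ i j u • univGenH τ a u =
      ∑ s : Fin n, ∑ t : Fin n, τ s t a • (univGenH τ s i * univGenH τ t j) := by
  have hmem : univPoly τ (fun i j => Finsupp.equivFunOnFinite.symm (τ i j)) a i j
      ∈ univIdealH τ := Ideal.subset_span ⟨(a, i, j), rfl⟩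
  have h0 : Ideal.Quotient.mkₐ k (univIdealH τ)
      (univPoly τ (fun i j => Finsupp.equivFunOnFinite.symm (τ i j)) a i j) = 0 := by
    rw [Ideal.Quotient.mkₐ_eq_mk]
    exact Ideal.Quotient.eq_zero_iff_mem.mpr hmem
  rw [univPoly, map_sub, sub_eq_zero] at h0
  have hL : (Ideal.Quotient.mkₐ k (univIdealH τ))
        ((Finsupp.equivFunOnFinite.symm (τ i j)).sum fun u c => C c * X (a, u)) =
      ∑ u, τ i j u • univGenH τ a u := by
    rw [map_finsuppSum, Finsupp.sum_fintype]
    · refine Finset.sum_congr rfl fun u _ => ?_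
      rw [← MvPolynomial.smul_eq_C_mul, map_smul, Finsupp.coe_equivFunOnFinite_symm,
        Ideal.Quotient.mkₐ_eq_mk]
      rfl
    · intro u; rw [map_zero, zero_mul, map_zero]
  have hR : (Ideal.Quotient.mkₐ k (univIdealH τ))
        (∑ s : Fin n, ∑ t : Fin n, C (τ s t a) * X (s, i) * X (t, j)) =
      ∑ s : Fin n, ∑ t : Fin n, τ s t a • (univGenH τ s i * univGenH τ t j) := by
    rw [map_sum]
    refine Finset.sum_congr rfl fun s _ => ?_
    rw [map_sum]
    refine Finset.sum_congr rfl fun t _ => ?_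
    rw [mul_assoc, ← MvPolynomial.smul_eq_C_mul, map_smul, map_mul, Ideal.Quotient.mkₐ_eq_mk]
    rfl
  rw [← hL, ← hR, h0]

lemma theta_relation {B : Type*} [CommRing B] [Algebra k B] (τ : Fin n → Fin n → Fin n → k)
    (θ : univAlgH τ →ₐ[k] B) (a i j : Fin n) :
    ∑ u, τ i j u • θ (univGenH τ a u) =
      ∑ s : Fin n, ∑ t : Fin n, τ s t a • (θ (univGenH τ s i) * θ (univGenH τ t j)) := by
  have := congrArg θ (gen_relation τ a i j)
  simpa [map_sum, map_smul, map_mul] using this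

/-- extensionality for algebra maps out of the universal algebra -/
lemma quot_ext {τ : Fin n → Fin n → Fin n → k} {B : Type*} [Semiring B] [Algebra k B]
    {f g : univAlgH τ →ₐ[k] B}
    (h : ∀ s i, f (univGenH τ s i) = g (univGenH τ s i)) : f = g := by
  apply Ideal.Quotient.algHom_ext
  apply MvPolynomial.algHom_ext
  intro p
  have := h p.1 p.2
  simpa [univGenH, univGen, Ideal.Quotient.mkₐ_eq_mk] using this

variable {G : Type*} [CommGroup G] [DecidableEq G]
variable {τ : Fin n → Fin n → Fin n → k}
variable {η : (Fin n → k) →ₗ[k] (Fin n → k) ⊗[k] univAlgH τ}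

lemma T_eq (hη : ∀ i : Fin n, η (Pi.single i 1) = ∑ s, Pi.single s 1 ⊗ₜ[k] univGenH τ s i)
    (θ : univAlgH τ →ₐ[k] MonoidAlgebra k G) (x : Fin n → k) :
    TensorProduct.map LinearMap.id θ.toLinearMap (η x) =
      ∑ s, Pi.single s 1 ⊗ₜ[k] Cmap (fun a i => θ (univGenH τ a i)) s x := by
  have h : (TensorProduct.map LinearMap.id θ.toLinearMap) ∘ₗ η =
      ∑ s, (TensorProduct.mk k (Fin n → k) (MonoidAlgebra k G) (Pi.single s 1)) ∘ₗ
        Cmap (fun a i => θ (univGenH τ a i)) s := by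
    apply ext_basis
    intro i
    simp only [LinearMap.comp_apply, hη, map_sum, TensorProduct.map_tmul, LinearMap.sum_apply,
      Cmap_single, LinearMap.id_coe, id_eq, TensorProduct.mk_apply, AlgHom.toLinearMap_apply]
  have := LinearMap.congr_fun h x
  simpa only [LinearMap.comp_apply, LinearMap.sum_apply, TensorProduct.mk_apply] using this

lemma mem_iff (hη : ∀ i : Fin n, η (Pi.single i 1) = ∑ s, Pi.single s 1 ⊗ₜ[k] univGenH τ s i)
    (θ : univAlgH τ →ₐ[k] MonoidAlgebra k G) (σ : G) (x : Fin n → k) :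
    TensorProduct.map LinearMap.id θ.toLinearMap (η x) = x ⊗ₜ[k] MonoidAlgebra.of k G σ ↔
      ∀ s, Cmap (fun a i => θ (univGenH τ a i)) s x = x s • MonoidAlgebra.single σ 1 := by
  rw [T_eq hη θ x]
  constructor
  · intro h s
    have := congrArg (phi s) h
    rw [phi_sum_single, phi_tmul, MonoidAlgebra.of_apply] at this
    exact this
  · intro h
    simp only [h]
    simp only [← smul_tmul]
    rw [← sum_tmul, sum_single_smul, MonoidAlgebra.of_apply]

/-- bilinear compatibility of `Cmap` with the bracket, for a bialgebra map θ -/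
lemma CB {bH : (Fin n → k) →ₗ[k] (Fin n → k) →ₗ[k] (Fin n → k)}
    (hbH : ∀ i j : Fin n, bH (Pi.single i 1) (Pi.single j 1) = fun s => τ i j s)
    (θ : univAlgH τ →ₐ[k] MonoidAlgebra k G) (a : Fin n) (x y : Fin n → k) :
    Cmap (fun a i => θ (univGenH τ a i)) a (bH x y) =
      ∑ s, ∑ t, τ s t a • (Cmap (fun a i => θ (univGenH τ a i)) s x *
        Cmap (fun a i => θ (univGenH τ a i)) t y) := by
  set c : Fin n → Fin n → MonoidAlgebra k G := fun a i => θ (univGenH τ a i) with hc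
  have h : bH.compr₂ (Cmap c a) =
      ∑ s, ∑ t, τ s t a •
        ((LinearMap.mul k (MonoidAlgebra k G)).compl₁₂ (Cmap c s) (Cmap c t)) := by
    apply ext_basis; intro i; apply ext_basis; intro j
    have hb : bH (Pi.single i 1) (Pi.single j 1) = ∑ u, τ i j u • (Pi.single u 1 : Fin n → k) := by
      rw [hbH i j]
      exact (sum_single_smul _).symm
    simp only [LinearMap.compr₂_apply, LinearMap.sum_apply, LinearMap.smul_apply,
      LinearMap.compl₁₂_apply, Cmap_single, LinearMap.mul_apply']
    rw [hb, map_sum]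
    simp only [map_smul, Cmap_single]
    exact theta_relation τ θ a i j
  have := LinearMap.congr_fun (LinearMap.congr_fun h x) y
  simpa only [LinearMap.compr₂_apply, LinearMap.sum_apply, LinearMap.smul_apply,
    LinearMap.compl₁₂_apply, LinearMap.mul_apply'] using this

end AuxRel

section AuxGrading
open DirectSum
variable {k : Type*} [Field k] {n : ℕ} {G : Type*} [CommGroup G] [DecidableEq G]
variable {ℌ : G → Submodule k (Fin n → k)}

noncomputable def Dmap (hD : DirectSum.IsInternal ℌ) :
    (Fin n → k) →ₗ[k] DirectSum G fun g => ℌ g :=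
  (LinearEquiv.ofBijective (DirectSum.coeLinearMap ℌ) hD).symm.toLinearMap

lemma Dmap_of (hD : DirectSum.IsInternal ℌ) {g : G} {x : Fin n → k} (hx : x ∈ ℌ g) :
    Dmap hD x = DirectSum.of (fun g => ℌ g) g ⟨x, hx⟩ := by
  apply (LinearEquiv.ofBijective (DirectSum.coeLinearMap ℌ) hD).injective
  rw [show Dmap hD x = (LinearEquiv.ofBijective (DirectSum.coeLinearMap ℌ) hD).symm x from rfl,
    LinearEquiv.apply_symm_apply]
  exact (DirectSum.coeLinearMap_of ℌ g ⟨x, hx⟩).symm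

lemma span_ind (hD : DirectSum.IsInternal ℌ) {P : (Fin n → k) → Prop}
    (hp : ∀ g, ∀ x ∈ ℌ g, P x) (h0 : P 0)
    (hadd : ∀ x y, P x → P y → P (x + y)) : ∀ x, P x := by
  intro x
  have hx : x ∈ ⨆ g, ℌ g := by
    rw [hD.submodule_iSup_eq_top]; trivial
  exact Submodule.iSup_induction (motive := P) ℌ hx hp h0 hadd

noncomputable def cmapD (hD : DirectSum.IsInternal ℌ) (a : Fin n) :
    (Fin n → k) →ₗ[k] MonoidAlgebra k G :=
  (DirectSum.toModule k G (MonoidAlgebra k G) fun g =>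
    LinearMap.smulRight ((LinearMap.proj a).comp (ℌ g).subtype)
      (MonoidAlgebra.single g 1)) ∘ₗ Dmap hD

lemma cmapD_piece (hD : DirectSum.IsInternal ℌ) {g : G} {x : Fin n → k} (hx : x ∈ ℌ g)
    (a : Fin n) : cmapD hD a x = x a • MonoidAlgebra.single g 1 := by
  rw [cmapD, LinearMap.comp_apply, Dmap_of hD hx, ← DirectSum.lof_eq_of k,
    DirectSum.toModule_lof]
  rfl

lemma ev_cmapD (hD : DirectSum.IsInternal ℌ) (g : G) (s : Fin n) :
    ∀ x, ev g (cmapD hD s x) = (Dmap hD x g : Fin n → k) s := by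
  refine span_ind hD ?_ ?_ ?_
  · intro h x hx
    rw [cmapD_piece hD hx, map_smul, ev_single, Dmap_of hD hx, smul_eq_mul]
    by_cases hg : h = g
    · subst hg
      rw [if_pos rfl, DirectSum.of_eq_same, mul_one]
    · rw [if_neg hg, DirectSum.of_eq_of_ne _ _ _ (Ne.symm hg), mul_zero]
      rfl
  · simp
  · intro x y hx hy
    rw [map_add, map_add, map_add, DirectSum.add_apply, Submodule.coe_add, Pi.add_apply,
      hx, hy]
end AuxGrading

section AuxGrading2
variable {k : Type*} [Field k] {n : ℕ} {G : Type*} [CommGroup G] [DecidableEq G]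
variable {τ : Fin n → Fin n → Fin n → k}
variable {bH : (Fin n → k) →ₗ[k] (Fin n → k) →ₗ[k] (Fin n → k)}
variable {ℌ : G → Submodule k (Fin n → k)}

lemma BI2 (hD : DirectSum.IsInternal ℌ)
    (hbH : ∀ i j : Fin n, bH (Pi.single i 1) (Pi.single j 1) = fun s => τ i j s)
    (hBr : ∀ σ δ : G, ∀ x ∈ ℌ σ, ∀ y ∈ ℌ δ, bH x y ∈ ℌ (σ * δ)) (a : Fin n) :
    ∀ x y, cmapD hD a (bH x y) =
      ∑ s, ∑ t, τ s t a • (cmapD hD s x * cmapD hD t y) := by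
  refine span_ind hD ?_ ?_ ?_
  · intro α x hx
    refine span_ind hD ?_ ?_ ?_
    · intro β y hy
      rw [cmapD_piece hD (hBr α β x hx y hy), bH_apply hbH, Finset.sum_smul]
      refine Finset.sum_congr rfl fun s _ => ?_
      rw [Finset.sum_smul]
      refine Finset.sum_congr rfl fun t _ => ?_
      rw [cmapD_piece hD hx, cmapD_piece hD hy]
      simp only [MonoidAlgebra.smul_single', MonoidAlgebra.single_mul_single]
      congr 1
      ring
    · simp
    · intro y y' hy hy'
      rw [map_add, map_add, hy, hy', ← Finset.sum_add_distrib]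
      refine Finset.sum_congr rfl fun s _ => ?_
      rw [← Finset.sum_add_distrib]
      refine Finset.sum_congr rfl fun t _ => ?_
      rw [map_add, mul_add, smul_add]
  · intro y
    simp
  · intro x x' hx hx' y
    rw [map_add, LinearMap.add_apply, map_add, hx y, hx' y, ← Finset.sum_add_distrib]
    refine Finset.sum_congr rfl fun s _ => ?_
    rw [← Finset.sum_add_distrib]
    refine Finset.sum_congr rfl fun t _ => ?_
    rw [map_add, add_mul, smul_add]
end AuxGrading2
set_option maxHeartbeats 2000000 in
/-- for an abelian group `G`, there is a bijection between the
`G`-gradings on `h` and the bialgebra homomorphisms `A(h) → k[G]`, under which a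
bialgebra map `θ` corresponds to the grading
`h_σ^{(θ)} = {x | (Id ⊗ θ)(η_h(x)) = x ⊗ σ}`: every bialgebra homomorphism gives a
`G`-grading by this formula, and every `G`-grading arises this way from a unique
bialgebra homomorphism. -/
theorem stmt_17 (k : Type*) [Field k] (n : ℕ) (τ : Fin n → Fin n → Fin n → k)
    (G : Type*) [CommGroup G] [DecidableEq G]
    (bH : (Fin n → k) →ₗ[k] (Fin n → k) →ₗ[k] (Fin n → k))
    (hbH : ∀ i j : Fin n, bH (Pi.single i 1) (Pi.single j 1) = fun s => τ i j s)
    (hLH : ∀ x y z, bH x (bH y z) = bH (bH x y) z - bH (bH x z) y)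
    (ΔA : univAlgH τ →ₐ[k] univAlgH τ ⊗[k] univAlgH τ) (εA : univAlgH τ →ₐ[k] k)
    (hΔ : ∀ i j : Fin n, ΔA (univGenH τ i j) =
      ∑ s : Fin n, univGenH τ i s ⊗ₜ[k] univGenH τ s j)
    (hε : ∀ i j : Fin n, εA (univGenH τ i j) = if i = j then 1 else 0)
    (η : (Fin n → k) →ₗ[k] (Fin n → k) ⊗[k] univAlgH τ)
    (hη : ∀ i : Fin n, η (Pi.single i 1) =
      ∑ s : Fin n, Pi.single s 1 ⊗ₜ[k] univGenH τ s i)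
    (ΔG : MonoidAlgebra k G →ₐ[k] MonoidAlgebra k G ⊗[k] MonoidAlgebra k G)
    (hΔG : ∀ σ : G, ΔG (MonoidAlgebra.of k G σ) =
      MonoidAlgebra.of k G σ ⊗ₜ[k] MonoidAlgebra.of k G σ)
    (εG : MonoidAlgebra k G →ₐ[k] k)
    (hεG : ∀ σ : G, εG (MonoidAlgebra.of k G σ) = 1) :
    (∀ θ : univAlgH τ →ₐ[k] MonoidAlgebra k G,
      ΔG.comp θ = (Algebra.TensorProduct.map θ θ).comp ΔA → εG.comp θ = εA →
        ∃ ℌ : G → Submodule k (Fin n → k),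
          (∀ σ : G, (ℌ σ : Set (Fin n → k)) =
            {x | TensorProduct.map LinearMap.id θ.toLinearMap (η x) =
              x ⊗ₜ[k] MonoidAlgebra.of k G σ}) ∧
          DirectSum.IsInternal ℌ ∧
          (∀ σ δ : G, ∀ x ∈ ℌ σ, ∀ y ∈ ℌ δ, bH x y ∈ ℌ (σ * δ))) ∧
    (∀ ℌ : G → Submodule k (Fin n → k), DirectSum.IsInternal ℌ →
      (∀ σ δ : G, ∀ x ∈ ℌ σ, ∀ y ∈ ℌ δ, bH x y ∈ ℌ (σ * δ)) →
        ∃! θ : univAlgH τ →ₐ[k] MonoidAlgebra k G,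
          ΔG.comp θ = (Algebra.TensorProduct.map θ θ).comp ΔA ∧ εG.comp θ = εA ∧
          ∀ σ : G, (ℌ σ : Set (Fin n → k)) =
            {x | TensorProduct.map LinearMap.id θ.toLinearMap (η x) =
              x ⊗ₜ[k] MonoidAlgebra.of k G σ}) := by
  classical
  constructor
  · -- Part 1: every bialgebra map gives a grading
    intro θ hΔθ hεθ
    set c : Fin n → Fin n → MonoidAlgebra k G := fun s i => θ (univGenH τ s i) with hc
    have εc : ∀ s i, εG (c s i) = if s = i then 1 else 0 := by
      intro s i
      have h1 := AlgHom.congr_fun hεθ (univGenH τ s i)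
      simp only [AlgHom.comp_apply] at h1
      rw [hc]
      rw [h1, hε]
    have Δc : ∀ i j, ΔG (c i j) = ∑ s, c i s ⊗ₜ[k] c s j := by
      intro i j
      have h1 := AlgHom.congr_fun hΔθ (univGenH τ i j)
      simp only [AlgHom.comp_apply] at h1
      rw [hc]
      rw [h1, hΔ, map_sum]
      exact Finset.sum_congr rfl fun s _ => Algebra.TensorProduct.map_tmul _ _ _ _
    have rel2' : ∀ (a b : G) (s j : Fin n),
        ∑ i, ev a (c s i) * ev b (c i j) = if a = b then ev a (c s j) else 0 := by
      intro a b s j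
      have h1 := congrArg (ev2 a b) (Δc s j)
      rw [ev2_DeltaG ΔG hΔG, map_sum] at h1
      simp only [ev2_tmul] at h1
      exact h1.symm
    set p : G → ((Fin n → k) →ₗ[k] (Fin n → k)) :=
      fun g => LinearMap.pi (fun s => (ev g) ∘ₗ Cmap c s) with hp
    have p_apply : ∀ g x s, p g x s = ev g (Cmap c s x) := fun g x s => rfl
    have evCmap : ∀ g s x, ev g (Cmap c s x) = ∑ i, x i * ev g (c s i) := by
      intro g s x
      rw [Cmap_apply, map_sum]
      exact Finset.sum_congr rfl fun i _ => by rw [map_smul, smul_eq_mul]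
    have p_orth : ∀ a b x, p a (p b x) = if a = b then p a x else 0 := by
      intro a b x
      funext s
      rw [p_apply, evCmap]
      have step : ∀ i, p b x i = ∑ j, x j * ev b (c i j) := fun i => by rw [p_apply, evCmap]
      have e1 : ∑ i, p b x i * ev a (c s i)
          = ∑ i, ∑ j, x j * ev b (c i j) * ev a (c s i) := by
        refine Finset.sum_congr rfl fun i _ => ?_
        rw [step i, Finset.sum_mul]
      have e2 : ∑ i, ∑ j, (x j * ev b (c i j) * ev a (c s i))
          = ∑ j, x j * ∑ i, ev a (c s i) * ev b (c i j) := by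
        rw [Finset.sum_comm]
        refine Finset.sum_congr rfl fun j _ => ?_
        rw [Finset.mul_sum]
        refine Finset.sum_congr rfl fun i _ => by ring
      rw [e1, e2]
      simp only [rel2']
      by_cases hab : a = b
      · simp only [if_pos hab]
        rw [p_apply, evCmap]
      · simp [if_neg hab]
    have εCmap : ∀ s x, εG (Cmap c s x) = x s := by
      intro s x
      rw [Cmap_apply, map_sum]
      have h1 : ∀ i, εG (x i • c s i) = if s = i then x i else 0 := fun i => by
        rw [map_smul, εc, smul_eq_mul]
        by_cases hi : s = i
        · rw [if_pos hi, if_pos hi, mul_one]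
        · rw [if_neg hi, if_neg hi, mul_zero]
      simp only [h1]
      rw [Finset.sum_ite_eq Finset.univ s x]
      simp
    set ℌp : G → Submodule k (Fin n → k) := fun σ => LinearMap.ker
      ((TensorProduct.map LinearMap.id θ.toLinearMap) ∘ₗ η -
        (TensorProduct.mk k (Fin n → k) (MonoidAlgebra k G)).flip (MonoidAlgebra.of k G σ))
      with hℌ
    have memT : ∀ σ x, x ∈ ℌp σ ↔ TensorProduct.map LinearMap.id θ.toLinearMap (η x) =
        x ⊗ₜ[k] MonoidAlgebra.of k G σ := by
      intro σ x
      rw [hℌ]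
      simp only [LinearMap.mem_ker, LinearMap.sub_apply, LinearMap.comp_apply,
        LinearMap.flip_apply, TensorProduct.mk_apply, sub_eq_zero]
    have memC : ∀ σ x, x ∈ ℌp σ ↔ ∀ s, Cmap c s x = x s • MonoidAlgebra.single σ 1 :=
      fun σ x => (memT σ x).trans (mem_iff hη θ σ x)
    have memP : ∀ σ x, x ∈ ℌp σ ↔ ∀ g, p g x = if g = σ then x else 0 := by
      intro σ x
      rw [memC]
      constructor
      · intro h g
        funext s
        rw [p_apply, h s, map_smul, ev_single, smul_eq_mul]
        by_cases hg : g = σ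
        · rw [if_pos hg, if_pos (hg.symm : σ = g), mul_one]
        · rw [if_neg hg, if_neg (fun hh : σ = g => hg hh.symm), mul_zero]
          rfl
      · intro h s
        apply ev_ext; intro g
        have h2 := congrFun (h g) s
        rw [p_apply] at h2
        rw [h2, map_smul, ev_single, smul_eq_mul]
        by_cases hg : g = σ
        · rw [if_pos hg, if_pos (hg.symm : σ = g), mul_one]
        · rw [if_neg hg, if_neg (fun hh : σ = g => hg hh.symm), mul_zero]
          rfl
    refine ⟨ℌp, ?_, ?_, ?_⟩
    · intro σ
      ext x
      simp only [SetLike.mem_coe, Set.mem_setOf_eq]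
      exact memT σ x
    · refine DirectSum.isInternal_submodule_of_iSupIndep_of_iSup_eq_top ?_ ?_
      · intro σ
        rw [disjoint_iff_inf_le]
        rintro x ⟨hx1, hx2⟩
        have hps : p σ x = x := by rw [(memP σ x).mp hx1 σ, if_pos rfl]
        have h0 : p σ x = 0 := by
          refine Submodule.iSup_induction (motive := fun y => p σ y = 0) _ hx2 ?_ ?_ ?_
          · intro j y hy
            by_cases hj : j = σ
            · subst hj
              rw [iSup_neg (by simp)] at hy
              rw [Submodule.mem_bot] at hy
              rw [hy, map_zero]
            · rw [iSup_pos hj] at hy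
              rw [(memP j y).mp hy σ, if_neg (fun hh : σ = j => hj hh.symm)]
          · exact map_zero _
          · intro y z hy hz; rw [map_add, hy, hz, add_zero]
        rw [Submodule.mem_bot, ← hps, h0]
      · rw [eq_top_iff]
        intro x _
        have hx : x = ∑ g ∈ Finset.univ.biUnion (fun s : Fin n => (Cmap c s x).coeff.support),
            p g x := by
          funext s
          rw [Finset.sum_apply]
          have : ∀ g, p g x s = ev g (Cmap c s x) := fun g => p_apply g x s
          simp only [this]
          rw [sum_ev_eq_eps εG hεG _ _ (fun g hg => Finset.mem_biUnion.mpr ⟨s,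
            Finset.mem_univ s, hg⟩), εCmap]
        rw [hx]
        refine Submodule.sum_mem _ fun g _ => Submodule.mem_iSup_of_mem g ?_
        rw [memP]
        intro a
        rw [p_orth]
        by_cases hag : a = g
        · subst hag; simp
        · rw [if_neg hag, if_neg hag]
    · intro σ δ x hx y hy
      rw [memC] at hx hy
      rw [memC]
      intro s
      have hCB := CB (τ := τ) hbH θ s x y
      rw [← hc] at hCB
      rw [hCB, bH_apply hbH, Finset.sum_smul]
      refine Finset.sum_congr rfl fun a _ => ?_
      rw [Finset.sum_smul]
      refine Finset.sum_congr rfl fun b _ => ?_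
      rw [hx a, hy b]
      simp only [MonoidAlgebra.smul_single', MonoidAlgebra.single_mul_single]
      congr 1
      ring
  · -- Part 2: every grading comes from a unique bialgebra map
    intro ℌ hD hBr
    have hBI := BI2 (τ := τ) hD hbH hBr
    have lin_expand : ∀ (f : (Fin n → k) →ₗ[k] MonoidAlgebra k G) (x : Fin n → k),
        f x = ∑ s, x s • f (Pi.single s 1) := by
      intro f x
      conv_lhs => rw [← sum_single_smul x]
      rw [map_sum]
      exact Finset.sum_congr rfl fun s _ => by rw [map_smul]
    have hkill : ∀ a i j, (aeval fun p : Fin n × Fin n => cmapD hD p.1 (Pi.single p.2 1))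
        (univPoly τ (fun i j => Finsupp.equivFunOnFinite.symm (τ i j)) a i j) = 0 := by
      intro a i j
      rw [univPoly, map_sub, sub_eq_zero]
      have hL : (aeval fun p : Fin n × Fin n => cmapD hD p.1 (Pi.single p.2 1))
          ((Finsupp.equivFunOnFinite.symm (τ i j)).sum fun u cc => C cc * X (a, u)) =
          ∑ u, τ i j u • cmapD hD a (Pi.single u 1) := by
        rw [map_finsuppSum, Finsupp.sum_fintype]
        · refine Finset.sum_congr rfl fun u _ => ?_
          rw [map_mul, aeval_C, aeval_X, Finsupp.coe_equivFunOnFinite_symm,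
            ← Algebra.smul_def]
        · intro u; rw [map_zero, zero_mul, map_zero]
      have hR : (aeval fun p : Fin n × Fin n => cmapD hD p.1 (Pi.single p.2 1))
          (∑ s : Fin n, ∑ t : Fin n, C (τ s t a) * X (s, i) * X (t, j)) =
          ∑ s, ∑ t, τ s t a •
            (cmapD hD s (Pi.single i 1) * cmapD hD t (Pi.single j 1)) := by
        rw [map_sum]
        refine Finset.sum_congr rfl fun s _ => ?_
        rw [map_sum]
        refine Finset.sum_congr rfl fun t _ => ?_
        rw [map_mul, map_mul, aeval_C, aeval_X, aeval_X, mul_assoc, ← Algebra.smul_def]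
      rw [hL, hR]
      have hbe : bH (Pi.single i 1) (Pi.single j 1) =
          ∑ u, τ i j u • (Pi.single u 1 : Fin n → k) := by
        rw [hbH i j]
        exact (sum_single_smul _).symm
      have h2 := hBI a (Pi.single i 1) (Pi.single j 1)
      rw [hbe, map_sum] at h2
      simp only [map_smul] at h2
      exact h2
    have hker : ∀ q ∈ univIdealH τ,
        (aeval fun p : Fin n × Fin n => cmapD hD p.1 (Pi.single p.2 1)) q = 0 := by
      intro q hq
      have hle : Ideal.span (Set.range fun p : Fin n × Fin n × Fin n =>
          univPoly τ (fun i j => Finsupp.equivFunOnFinite.symm (τ i j)) p.1 p.2.1 p.2.2) ≤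
          RingHom.ker ((aeval fun p : Fin n × Fin n =>
          cmapD hD p.1 (Pi.single p.2 1)) :
            MvPolynomial (Fin n × Fin n) k →ₐ[k] MonoidAlgebra k G).toRingHom := by
        rw [Ideal.span_le]
        rintro _ ⟨pp, rfl⟩
        simp only [SetLike.mem_coe, RingHom.mem_ker]
        exact hkill pp.1 pp.2.1 pp.2.2
      exact hle hq
    set θ : univAlgH τ →ₐ[k] MonoidAlgebra k G := Ideal.Quotient.liftₐ _ _ hker with hθdef
    have hθgen : ∀ s i, θ (univGenH τ s i) = cmapD hD s (Pi.single i 1) := by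
      intro s i
      have hgen : univGenH τ s i = Ideal.Quotient.mk (univIdealH τ) (X (s, i)) := rfl
      rw [hθdef, hgen, Ideal.Quotient.liftₐ_apply]
      erw [Ideal.Quotient.lift_mk]
      simp [aeval_X]
    have hCc : ∀ s, Cmap (fun a i => θ (univGenH τ a i)) s = cmapD hD s := by
      intro s
      apply ext_basis
      intro i
      rw [Cmap_single, hθgen]
    have hΔg : ∀ g : G, ΔG (MonoidAlgebra.single g 1) =
        MonoidAlgebra.single g 1 ⊗ₜ[k] MonoidAlgebra.single g 1 := by
      intro g
      have := hΔG g
      rwa [MonoidAlgebra.of_apply] at this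
    have hεg : ∀ g : G, εG (MonoidAlgebra.single g 1) = 1 := by
      intro g
      have := hεG g
      rwa [MonoidAlgebra.of_apply] at this
    have hDg : ΔG.comp θ = (Algebra.TensorProduct.map θ θ).comp ΔA := by
      apply quot_ext
      intro i j
      simp only [AlgHom.comp_apply]
      rw [hΔ, map_sum]
      have hmt : ∀ s, (Algebra.TensorProduct.map θ θ) (univGenH τ i s ⊗ₜ[k] univGenH τ s j) =
          θ (univGenH τ i s) ⊗ₜ[k] θ (univGenH τ s j) := fun s =>
        Algebra.TensorProduct.map_tmul _ _ _ _
      simp only [hmt, hθgen]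
      have key : ∀ x, ΔG (cmapD hD i x) =
          ∑ s, cmapD hD i (Pi.single s 1) ⊗ₜ[k] cmapD hD s x := by
        refine span_ind hD ?_ ?_ ?_
        · intro g x hx
          rw [cmapD_piece hD hx i, map_smul, hΔg g]
          have hr : ∀ s, cmapD hD i (Pi.single s 1) ⊗ₜ[k] cmapD hD s x =
              x s • (cmapD hD i (Pi.single s 1) ⊗ₜ[k] MonoidAlgebra.single g 1) := by
            intro s
            rw [cmapD_piece hD hx s, tmul_smul]
          rw [Finset.sum_congr rfl fun s _ => hr s]
          simp only [smul_tmul']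
          rw [← sum_tmul, ← lin_expand (cmapD hD i) x, cmapD_piece hD hx i]
        · simp
        · intro x y hx hy
          rw [map_add, map_add, hx, hy, ← Finset.sum_add_distrib]
          exact Finset.sum_congr rfl fun s _ => by rw [map_add, tmul_add]
      exact key (Pi.single j 1)
    have hEg : εG.comp θ = εA := by
      apply quot_ext
      intro i j
      simp only [AlgHom.comp_apply]
      rw [hθgen, hε]
      have key : ∀ x, εG (cmapD hD i x) = x i := by
        refine span_ind hD ?_ ?_ ?_
        · intro g x hx
          rw [cmapD_piece hD hx, map_smul, hεg g, smul_eq_mul, mul_one]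
        · simp
        · intro x y hx hy
          rw [map_add, map_add, hx, hy]
          rfl
      rw [key]
      rw [Pi.single_apply]
    have memiff : ∀ (σ : G) (x : Fin n → k), x ∈ ℌ σ ↔
        TensorProduct.map LinearMap.id θ.toLinearMap (η x) =
          x ⊗ₜ[k] MonoidAlgebra.of k G σ := by
      intro σ x
      rw [mem_iff hη θ σ x]
      constructor
      · intro hx s
        rw [hCc s, cmapD_piece hD hx]
      · intro h
        have hDx : ((Dmap hD x σ : ℌ σ) : Fin n → k) = x := by
          funext s
          have h1 := ev_cmapD hD σ s x
          rw [← hCc s, h s, map_smul, ev_single, if_pos rfl, smul_eq_mul, mul_one] at h1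
          exact h1.symm
        have h2 := (Dmap hD x σ).2
        rwa [hDx] at h2
    refine ⟨θ, ⟨hDg, hEg, ?_⟩, ?_⟩
    · intro σ
      ext x
      simp only [SetLike.mem_coe, Set.mem_setOf_eq]
      exact memiff σ x
    · rintro θ' ⟨h1, h2, h3⟩
      apply quot_ext
      intro s i
      have hCc' : ∀ (s : Fin n) (x : Fin n → k),
          Cmap (fun a i => θ' (univGenH τ a i)) s x = cmapD hD s x := by
        intro s
        refine span_ind hD ?_ ?_ ?_
        · intro g x hx
          have hxσ : TensorProduct.map LinearMap.id θ'.toLinearMap (η x) =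
              x ⊗ₜ[k] MonoidAlgebra.of k G g := by
            have hmem : x ∈ {x : Fin n → k |
                TensorProduct.map LinearMap.id θ'.toLinearMap (η x) =
                  x ⊗ₜ[k] MonoidAlgebra.of k G g} := by
              rw [← h3 g]
              exact hx
            exact hmem
          have h4 := (mem_iff hη θ' g x).mp hxσ s
          rw [h4, cmapD_piece hD hx]
        · simp
        · intro x y hx hy
          rw [map_add, map_add, hx, hy]
      have h5 := hCc' s (Pi.single i 1)
      rw [Cmap_single] at h5
      rw [h5, hθgen]
end
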